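/- For integer n ≥ 2, the function b(p) = (1 - n·p)·p/(1 - p) on [0, 1/n] attains its maximum at p̂ = 1 - √(n·(n-1))/n, and the maximum value equals (2n - 1) - 2·√(n·(n-1)). -/

import Mathlib

theorem stmt_2 (n : ℕ) (hn : 2 ≤ n) :
    IsMaxOn (fun p : ℝ => (1 - n * p) * p / (1 - p)) (Set.Icc 0 (1 / n))
      (1 - Real.sqrt (n * (n - 1)) / n) ∧
    (1 - n * (1 - Real.sqrt (n * (n - 1)) / n)) * (1 - Real.sqrt (n * (n - 1)) / n) /
        (1 - (1 - Real.sqrt (n * (n - 1)) / n)) =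
      (2 * n - 1) - 2 * Real.sqrt (n * (n - 1)) := by
  have hn2 : (2:ℝ) ≤ (n:ℝ) := by exact_mod_cast hn
  set N := (n:ℝ) with hN
  have hNpos : 0 < N := by linarith
  have hprod : 0 ≤ N * (N - 1) := by nlinarith
  set s := Real.sqrt (N * (N - 1)) with hs
  have hs2 : s ^ 2 = N * (N - 1) := Real.sq_sqrt hprod
  have hsnn : 0 ≤ s := Real.sqrt_nonneg _
  have hspos : 0 < s := Real.sqrt_pos.mpr (by nlinarith)
  have hsltN : s < N := by nlinarith
  have hsge : N - 1 ≤ s := by nlinarith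
  constructor
  · intro p hp
    simp only [Set.mem_Icc] at hp
    obtain ⟨hp0, hp1⟩ := hp
    have hplt1 : p < 1 := lt_of_le_of_lt hp1 (by rw [div_lt_one hNpos]; linarith)
    have h1p : 0 < 1 - p := by linarith
    have hden : (0:ℝ) < 1 - (1 - s / N) := by
      have : 0 < s / N := div_pos hspos hNpos
      linarith
    simp only [Set.mem_setOf_eq]
    rw [div_le_div_iff₀ h1p hden]
    have hpn : p * N ≤ 1 := by
      rw [le_div_iff₀ hNpos] at hp1; linarith
    have key : 0 ≤ (1 - p) * (N * p - (N - s)) ^ 2 :=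
      mul_nonneg h1p.le (sq_nonneg _)
    have hNne : N ≠ 0 := ne_of_gt hNpos
    field_simp
    nlinarith [key, hs2, mul_pos hspos h1p]
  · have hNne : N ≠ 0 := ne_of_gt hNpos
    have hden : (1 : ℝ) - (1 - s / N) ≠ 0 := by
      have : 0 < s / N := div_pos hspos hNpos
      intro h; simp at h; rcases h with h | h
      · linarith
      · exact hNne h
    field_simp
    rw [div_eq_iff (by intro h; linarith)]
    nlinarith [hs2]
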